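/- arXiv:1506.02005 — 2 statements merged into one kernel-verified Lean document; each statement's English description precedes it below -/
import Mathlib

section
/- Let n, m be positive integers, let A be a 2n×2n, B a 2n×2m, and C a 2m×2n complex matrix, each of Δ-form, and let D = I_{2m}. Then the following are equivalent: (i) there exist an invertible Δ-form 2n×2n complex matrix T, a Hermitian Δ-form 2n×2n complex matrix M, and a Δ-form 2m×2n complex matrix N such that, setting Θ = T J_n T†, one has A = −iΘM − (1/2)ΘN†J_m N, B = −ΘN†J_m, and C = N; (ii) there exists an invertible Δ-form 2n×2n complex matrix T such that Θ = T J_n T† satisfies AΘ + ΘA† + B J_m B† = 0 and B = −ΘC†J_m. -/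
open Matrix

/-- The matrix `J_k = diag(I_k, -I_k)`. -/
noncomputable def Jmat (k : ℕ) : Matrix (Fin k ⊕ Fin k) (Fin k ⊕ Fin k) ℂ :=
  fromBlocks 1 0 0 (-1)

/-- A `2p × 2q` complex matrix is of Δ-form if it equals
`[[X1, X2], [X2^#, X1^#]]` for some `p × q` matrices `X1, X2`. -/
def IsDelta {p q : ℕ} (X : Matrix (Fin p ⊕ Fin p) (Fin q ⊕ Fin q) ℂ) : Prop :=
  ∃ X1 X2 : Matrix (Fin p) (Fin q) ℂ,
    X = fromBlocks X1 X2 (X2.map (starRingEnd ℂ)) (X1.map (starRingEnd ℂ))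

noncomputable def Sg (p : ℕ) : Matrix (Fin p ⊕ Fin p) (Fin p ⊕ Fin p) ℂ :=
  fromBlocks 0 1 1 0

noncomputable def Phi {p q : ℕ} (X : Matrix (Fin p ⊕ Fin p) (Fin q ⊕ Fin q) ℂ) :
    Matrix (Fin p ⊕ Fin p) (Fin q ⊕ Fin q) ℂ :=
  Sg p * X.map (starRingEnd ℂ) * Sg q

lemma Sg_mul_Sg (p : ℕ) : Sg p * Sg p = 1 := by
  simp [Sg, fromBlocks_multiply, ← fromBlocks_one]

lemma map_conj_conj {p q : ℕ} (X : Matrix (Fin p) (Fin q) ℂ) :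
    (X.map (starRingEnd ℂ)).map (starRingEnd ℂ) = X := by
  ext i j; simp

lemma isDelta_iff {p q : ℕ} (X : Matrix (Fin p ⊕ Fin p) (Fin q ⊕ Fin q) ℂ) :
    IsDelta X ↔ Phi X = X := by
  constructor
  · rintro ⟨X1, X2, rfl⟩
    simp only [Phi, Sg, fromBlocks_map, fromBlocks_multiply, map_conj_conj]
    simp [map_conj_conj]
  · intro h
    obtain ⟨a, b, c, d, rfl⟩ :
        ∃ a b c d, X = fromBlocks a b c d := ⟨_, _, _, _, (fromBlocks_toBlocks X).symm⟩
    simp only [Phi, Sg, fromBlocks_map, fromBlocks_multiply, Matrix.zero_mul, Matrix.one_mul,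
      Matrix.mul_one, Matrix.mul_zero, add_zero, zero_add, fromBlocks_inj] at h
    exact ⟨a, b, by rw [← h.2.2.1, ← h.2.2.2]⟩

lemma Sg_mul_Sg_mul {p q : ℕ} (Z : Matrix (Fin p ⊕ Fin p) (Fin q ⊕ Fin q) ℂ) :
    Sg p * (Sg p * Z) = Z := by
  rw [← Matrix.mul_assoc, Sg_mul_Sg, Matrix.one_mul]

lemma Phi_mul {p q r : ℕ} (X : Matrix (Fin p ⊕ Fin p) (Fin q ⊕ Fin q) ℂ)
    (Y : Matrix (Fin q ⊕ Fin q) (Fin r ⊕ Fin r) ℂ) :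
    Phi (X * Y) = Phi X * Phi Y := by
  simp only [Phi, Matrix.map_mul, Matrix.mul_assoc, Sg_mul_Sg_mul]

lemma Phi_add {p q : ℕ} (X Y : Matrix (Fin p ⊕ Fin p) (Fin q ⊕ Fin q) ℂ) :
    Phi (X + Y) = Phi X + Phi Y := by
  have : (X + Y).map (starRingEnd ℂ) = X.map (starRingEnd ℂ) + Y.map (starRingEnd ℂ) := by
    ext i j; simp
  simp only [Phi, this, Matrix.add_mul, Matrix.mul_add]

lemma Phi_smul {p q : ℕ} (s : ℂ) (X : Matrix (Fin p ⊕ Fin p) (Fin q ⊕ Fin q) ℂ) :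
    Phi (s • X) = (starRingEnd ℂ s) • Phi X := by
  have : (s • X).map (starRingEnd ℂ) = (starRingEnd ℂ s) • X.map (starRingEnd ℂ) := by
    ext i j; simp
  simp only [Phi, this, Matrix.smul_mul, Matrix.mul_smul]

lemma Phi_one {p : ℕ} : Phi (1 : Matrix (Fin p ⊕ Fin p) (Fin p ⊕ Fin p) ℂ) = 1 := by
  have : (1 : Matrix (Fin p ⊕ Fin p) (Fin p ⊕ Fin p) ℂ).map (starRingEnd ℂ) = 1 := by
    ext i j; by_cases h : i = j <;> simp [Matrix.one_apply, h]
  rw [Phi, this, Matrix.mul_one, Sg_mul_Sg]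

lemma map_conj_conjTranspose {p q : ℕ} (X : Matrix (Fin p ⊕ Fin p) (Fin q ⊕ Fin q) ℂ) :
    (Xᴴ).map (starRingEnd ℂ) = (X.map (starRingEnd ℂ))ᴴ := by
  ext i j; simp

lemma Sg_herm (p : ℕ) : (Sg p)ᴴ = Sg p := by
  simp [Sg, fromBlocks_conjTranspose]

lemma Phi_conjTranspose {p q : ℕ} (X : Matrix (Fin p ⊕ Fin p) (Fin q ⊕ Fin q) ℂ) :
    Phi (Xᴴ) = (Phi X)ᴴ := by
  simp only [Phi, map_conj_conjTranspose, conjTranspose_mul, Sg_herm, Matrix.mul_assoc]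

lemma Jmat_herm (k : ℕ) : (Jmat k)ᴴ = Jmat k := by
  simp [Jmat, fromBlocks_conjTranspose]

lemma Jmat_mul_Jmat (k : ℕ) : Jmat k * Jmat k = 1 := by
  simp [Jmat, fromBlocks_multiply, ← fromBlocks_one]

lemma Jmat_mul_Jmat_mul {k p : ℕ} (Z : Matrix (Fin k ⊕ Fin k) (Fin p ⊕ Fin p) ℂ) :
    Jmat k * (Jmat k * Z) = Z := by
  rw [← Matrix.mul_assoc, Jmat_mul_Jmat, Matrix.one_mul]

lemma Phi_Jmat (k : ℕ) : Phi (Jmat k) = -(Jmat k) := by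
  have : (Jmat k).map (starRingEnd ℂ) = Jmat k := by
    ext i j
    cases i <;> cases j <;> simp [Jmat, fromBlocks, Matrix.one_apply, apply_ite]
  rw [Phi, this]
  simp [Jmat, Sg, fromBlocks_multiply, fromBlocks_neg]

theorem physically_realizable_iff
    (n m : ℕ) (hn : 0 < n) (hm : 0 < m)
    (A : Matrix (Fin n ⊕ Fin n) (Fin n ⊕ Fin n) ℂ)
    (B : Matrix (Fin n ⊕ Fin n) (Fin m ⊕ Fin m) ℂ)
    (C : Matrix (Fin m ⊕ Fin m) (Fin n ⊕ Fin n) ℂ)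
    (D : Matrix (Fin m ⊕ Fin m) (Fin m ⊕ Fin m) ℂ)
    (hA : IsDelta A) (hB : IsDelta B) (hC : IsDelta C) (hD : D = 1) :
    (∃ (T M : Matrix (Fin n ⊕ Fin n) (Fin n ⊕ Fin n) ℂ)
        (N : Matrix (Fin m ⊕ Fin m) (Fin n ⊕ Fin n) ℂ),
        IsDelta T ∧ IsUnit T ∧ IsDelta M ∧ M.IsHermitian ∧ IsDelta N ∧
        A = (-Complex.I) • ((T * Jmat n * Tᴴ) * M)
            - (1 / 2 : ℂ) • ((T * Jmat n * Tᴴ) * Nᴴ * Jmat m * N) ∧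
        B = -((T * Jmat n * Tᴴ) * Nᴴ * Jmat m) ∧
        C = N)
    ↔ (∃ T : Matrix (Fin n ⊕ Fin n) (Fin n ⊕ Fin n) ℂ,
        IsDelta T ∧ IsUnit T ∧
        A * (T * Jmat n * Tᴴ) + (T * Jmat n * Tᴴ) * Aᴴ + B * Jmat m * Bᴴ = 0 ∧
        B = -((T * Jmat n * Tᴴ) * Cᴴ * Jmat m)) := by
  constructor
  · rintro ⟨T, M, N, hTd, hTu, hMd, hMh, hNd, hAeq, hBeq, rfl⟩
    refine ⟨T, hTd, hTu, ?_, hBeq⟩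
    rw [hAeq, hBeq]
    set Θ := T * Jmat n * Tᴴ with hΘdef
    have hΘh : Θᴴ = Θ := by
      rw [hΘdef]
      simp only [conjTranspose_mul, Jmat_herm, conjTranspose_conjTranspose, Matrix.mul_assoc]
    simp only [conjTranspose_sub, conjTranspose_smul, conjTranspose_neg, conjTranspose_mul,
      conjTranspose_conjTranspose, Jmat_herm, hΘh, hMh.eq, Complex.star_def, map_neg,
      Complex.conj_I, map_div₀, _root_.map_one, map_ofNat, Matrix.sub_mul, Matrix.mul_sub,
      Matrix.smul_mul, Matrix.mul_smul, Matrix.neg_mul, Matrix.mul_neg, neg_neg,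
      Matrix.mul_assoc, Jmat_mul_Jmat_mul]
    module
  · rintro ⟨T, hTd, hTu, h1, h2⟩
    set Θ := T * Jmat n * Tᴴ with hΘdef
    have hΘh : Θᴴ = Θ := by
      rw [hΘdef]
      simp only [conjTranspose_mul, Jmat_herm, conjTranspose_conjTranspose, Matrix.mul_assoc]
    have hdT : IsUnit T.det := (Matrix.isUnit_iff_isUnit_det T).mp hTu
    have hdTH : IsUnit Tᴴ.det := by rw [Matrix.det_conjTranspose]; exact hdT.star
    have hdJ : IsUnit (Jmat n).det :=
      Matrix.isUnit_det_of_right_inverse (Jmat_mul_Jmat n)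
    have hdΘ : IsUnit Θ.det := by
      rw [hΘdef, Matrix.det_mul, Matrix.det_mul]; exact (hdT.mul hdJ).mul hdTH
    set P := Θ⁻¹ with hPdef
    have hΘP : Θ * P = 1 := Matrix.mul_nonsing_inv _ hdΘ
    have hPΘ : P * Θ = 1 := Matrix.nonsing_inv_mul _ hdΘ
    have hPh : Pᴴ = P := by rw [hPdef, Matrix.conjTranspose_nonsing_inv, hΘh]
    have hΘP' : ∀ {r : ℕ} (Z : Matrix (Fin n ⊕ Fin n) (Fin r ⊕ Fin r) ℂ), Θ * (P * Z) = Z := by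
      intro r Z; rw [← Matrix.mul_assoc, hΘP, Matrix.one_mul]
    have hPΘ' : ∀ {r : ℕ} (Z : Matrix (Fin n ⊕ Fin n) (Fin r ⊕ Fin r) ℂ), P * (Θ * Z) = Z := by
      intro r Z; rw [← Matrix.mul_assoc, hPΘ, Matrix.one_mul]
    have hPhiΘ : Phi Θ = -Θ := by
      rw [hΘdef, Phi_mul, Phi_mul, Phi_conjTranspose, (isDelta_iff T).mp hTd, Phi_Jmat]
      simp [Matrix.mul_neg, Matrix.neg_mul]
    have hPhiP : Phi P = -P := by
      have h0 : Θ * (-(Phi P)) = 1 := by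
        have hh := Phi_mul Θ P
        rw [hΘP, Phi_one, hPhiΘ, Matrix.neg_mul] at hh
        rw [Matrix.mul_neg]; exact hh.symm
      have h3 := Matrix.inv_eq_right_inv h0
      rw [← hPdef] at h3
      have h4 := congrArg Neg.neg h3
      rw [neg_neg] at h4
      exact h4.symm
    -- key identity
    rw [h2] at h1
    simp only [conjTranspose_neg, conjTranspose_mul, Jmat_herm, hΘh,
      conjTranspose_conjTranspose, Matrix.neg_mul, Matrix.mul_neg, neg_neg,
      Matrix.mul_assoc, Jmat_mul_Jmat_mul] at h1
    have key2 : P * A + Aᴴ * P + Cᴴ * (Jmat m * C) = 0 := by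
      have h4 := congrArg (fun Z => P * Z * P) h1
      simp only [Matrix.mul_add, Matrix.add_mul, Matrix.mul_assoc, Matrix.mul_zero,
        Matrix.zero_mul, hΘP, hPΘ', Matrix.mul_one] at h4
      simpa [Matrix.mul_assoc] using h4
    have hPA : P * A = -(Aᴴ * P + Cᴴ * (Jmat m * C)) := by
      refine eq_neg_of_add_eq_zero_left ?_
      rw [← add_assoc]; exact key2
    refine ⟨T, Complex.I • (P * A) + (Complex.I / 2) • (Cᴴ * (Jmat m * C)), C,
      hTd, hTu, ?_, ?_, hC, ?_, by rw [h2], rfl⟩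
    · rw [isDelta_iff]
      simp only [Phi_add, Phi_smul, Phi_mul, Phi_conjTranspose, Phi_Jmat, hPhiP,
        (isDelta_iff A).mp hA, (isDelta_iff C).mp hC]
      simp [Matrix.neg_mul, Matrix.mul_neg, Complex.conj_I, map_div₀, map_ofNat]
      module
    · show _ = _
      simp only [conjTranspose_add, conjTranspose_neg, conjTranspose_smul, conjTranspose_mul,
        conjTranspose_conjTranspose, Jmat_herm, hPh, Complex.star_def, Complex.conj_I,
        map_div₀, map_neg, map_ofNat, _root_.map_one, Matrix.mul_assoc, hPA]
      module
    · have e1 : -Complex.I * Complex.I = 1 := by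
        linear_combination (-1 : ℂ) * Complex.I_mul_I
      have e2 : -Complex.I * (Complex.I / 2) = 1 / 2 := by
        linear_combination (-1 / 2 : ℂ) * Complex.I_mul_I
      rw [← hΘdef]
      simp only [Matrix.mul_add, Matrix.mul_smul, smul_add, smul_smul, Matrix.mul_assoc,
        hΘP', e1, e2, one_smul]
      module
end

section
/- Let n, m be positive integers, let Θ be a Hermitian invertible 2n×2n complex matrix, A a 2n×2n complex matrix, and C a 2m×2n complex matrix, and suppose AΘ + ΘA† + ΘC†J_m CΘ = 0. Then the matrix M := iΘ^{-1}A + (i/2)C†J_m C is Hermitian, i.e., M† = M. -/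
open Matrix

theorem hamiltonian_isHermitian_of_realizability
    (n m : ℕ) (hn : 0 < n) (hm : 0 < m)
    (Θ A : Matrix (Fin n ⊕ Fin n) (Fin n ⊕ Fin n) ℂ)
    (C : Matrix (Fin m ⊕ Fin m) (Fin n ⊕ Fin n) ℂ)
    (hΘ : Θ.IsHermitian) (hΘinv : IsUnit Θ)
    (h : A * Θ + Θ * Aᴴ + Θ * Cᴴ * Jmat m * C * Θ = 0) :
    (Complex.I • (Θ⁻¹ * A) + (Complex.I / 2) • (Cᴴ * Jmat m * C)).IsHermitian := by
  have hd : IsUnit Θ.det := (Matrix.isUnit_iff_isUnit_det _).mp hΘinv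
  have hiΘ : Θ⁻¹ * Θ = 1 := nonsing_inv_mul Θ hd
  have hΘi : Θ * Θ⁻¹ = 1 := mul_nonsing_inv Θ hd
  have hc : ∀ X : Matrix (Fin n ⊕ Fin n) (Fin n ⊕ Fin n) ℂ, Θ⁻¹ * (Θ * X) = X := by
    intro X; rw [← Matrix.mul_assoc, hiΘ, Matrix.one_mul]
  have h1 : Θ⁻¹ * A + Aᴴ * Θ⁻¹ + Cᴴ * Jmat m * C = 0 := by
    have e := congrArg (fun X => Θ⁻¹ * X * Θ⁻¹) h
    simpa only [Matrix.mul_add, Matrix.add_mul, Matrix.mul_assoc, hΘi, hiΘ, hc,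
      Matrix.mul_one, Matrix.one_mul, Matrix.mul_zero, Matrix.zero_mul] using e
  have h2 : Aᴴ * Θ⁻¹ = -(Θ⁻¹ * A) - Cᴴ * Jmat m * C := by
    rw [add_comm (Θ⁻¹ * A), add_assoc] at h1
    have := eq_neg_of_add_eq_zero_left h1
    rwa [neg_add, ← sub_eq_add_neg] at this
  have hCJC : (Cᴴ * Jmat m * C)ᴴ = Cᴴ * Jmat m * C := by
    rw [conjTranspose_mul, conjTranspose_mul, Jmat_herm, conjTranspose_conjTranspose,
      Matrix.mul_assoc]
  show _ = _
  rw [conjTranspose_add, conjTranspose_smul, conjTranspose_smul, conjTranspose_mul,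
    hΘ.inv, hCJC, h2]
  simp only [Complex.star_def, Complex.conj_I, map_div₀, Complex.conj_ofNat]
  module
end
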